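/- arXiv:0707.3211 — 2 statements merged into one kernel-verified Lean document; each statement's English description precedes it below -/
import Mathlib

section
/- Let (f₀,φ₀) be a minimizer of the energy functional, i.e. an admissible pair with 𝓔(f₀,φ₀) = I^k_{M,J}. Then the relativistic Virial identity holds: (1/2)∫_{ℝ³} |∇φ₀(x)|² dx = ∫_{ℝ³}∫_{ℝ³} |p|² (e^{2φ₀(x)}+|p|²)^{-1/2} f₀(x,p) dp dx. -/
open MeasureTheory Real Filter Topology
open scoped ENNReal

noncomputable section

/-- Euclidean 3-space. -/
abbrev E3 := EuclideanSpace ℝ (Fin 3)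

/-- `φ` belongs to (a C¹ surrogate of) the space `D¹(ℝ³)`: it is continuously
differentiable, its gradient is square integrable and it vanishes at infinity in
the sense that `{|φ| > a}` has finite measure for every `a > 0`. -/
def IsPotential (φ : E3 → ℝ) : Prop :=
  ContDiff ℝ 1 φ ∧ (∫⁻ x : E3, ENNReal.ofReal (‖gradient φ x‖ ^ 2)) < ⊤ ∧
    ∀ a : ℝ, 0 < a → volume {x : E3 | a < |φ x|} < ⊤

/-- `f ∈ Γ^k_{M,J}`: `f` is measurable, a.e. nonnegative, with `‖f‖_{L¹} = M` and
`‖f‖_{L^{1+1/k}} ≤ J` (in particular `f ∈ L¹ ∩ L^{1+1/k}`). -/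
def InGamma (k M J : ℝ) (f : E3 → E3 → ℝ) : Prop :=
  Measurable (Function.uncurry f) ∧
  (∀ᵐ z : E3 × E3, 0 ≤ f z.1 z.2) ∧
  (∫⁻ z : E3 × E3, ENNReal.ofReal (f z.1 z.2)) = ENNReal.ofReal M ∧
  eLpNorm (Function.uncurry f) (ENNReal.ofReal (1 + 1/k)) volume ≤ ENNReal.ofReal J

/-- Kinetic energy `E_kin(f,φ) = ∫∫ √(e^{2φ(x)}+|p|²) f(x,p) dp dx` (value in `[0,∞]`). -/
def kinE (f : E3 → E3 → ℝ) (φ : E3 → ℝ) : ℝ≥0∞ :=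
  ∫⁻ z : E3 × E3, ENNReal.ofReal (Real.sqrt (Real.exp (2 * φ z.1) + ‖z.2‖ ^ 2) * f z.1 z.2)

/-- Energy functional `𝓔(f,φ) = E_kin(f,φ) + (1/2)∫ |∇φ|²` (value in `[0,∞]`). -/
def energy (f : E3 → E3 → ℝ) (φ : E3 → ℝ) : ℝ≥0∞ :=
  kinE f φ + (∫⁻ x : E3, ENNReal.ofReal (‖gradient φ x‖ ^ 2)) / 2

/-- `(f,φ)` is admissible: `f ∈ Γ^k_{M,J}`, `φ` is a potential and
`∫∫ √(1+|p|²) f dp dx < ∞`. -/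
def Admissible (k M J : ℝ) (f : E3 → E3 → ℝ) (φ : E3 → ℝ) : Prop :=
  InGamma k M J f ∧ IsPotential φ ∧
  (∫⁻ z : E3 × E3, ENNReal.ofReal (Real.sqrt (1 + ‖z.2‖ ^ 2) * f z.1 z.2)) < ⊤

/-- The energy infimum `I^k_{M,J} = inf {𝓔(f,φ) : (f,φ) admissible}`. -/
def energyInf (k M J : ℝ) : ℝ≥0∞ :=
  sInf { e : ℝ≥0∞ | ∃ f φ, Admissible k M J f φ ∧ e = energy f φ }

open InnerProductSpace
/-! ### Auxiliary lemmas -/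

lemma measurePreserving_scale {l : ℝ} (hl : 0 < l) :
    MeasurePreserving (fun z : E3 × E3 => (l • z.1, l⁻¹ • z.2)) volume volume := by
  have hl' : l ≠ 0 := hl.ne'
  have hmeas : Measurable fun z : E3 × E3 => (l • z.1, l⁻¹ • z.2) :=
    ((measurable_const_smul l).comp measurable_fst).prodMk
      ((measurable_const_smul l⁻¹).comp measurable_snd)
  refine ⟨hmeas, ?_⟩
  rw [Measure.volume_eq_prod E3 E3]
  refine (Measure.prod_eq ?_).symm
  intro s t hs ht
  rw [Measure.map_apply hmeas (hs.prod ht)]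
  have hpre : (fun z : E3 × E3 => (l • z.1, l⁻¹ • z.2)) ⁻¹' (s ×ˢ t)
      = ((fun x : E3 => l • x) ⁻¹' s) ×ˢ ((fun p : E3 => l⁻¹ • p) ⁻¹' t) := rfl
  rw [hpre, ← Measure.volume_eq_prod E3 E3, Measure.volume_eq_prod E3 E3, Measure.prod_prod,
    Measure.addHaar_preimage_smul _ hl' s, Measure.addHaar_preimage_smul _ (inv_ne_zero hl') t]
  have h3 : Module.finrank ℝ E3 = 3 := finrank_euclideanSpace_fin
  rw [h3]
  rw [← mul_assoc, mul_comm (ENNReal.ofReal |(l ^ 3)⁻¹|) (volume s), mul_assoc, mul_assoc]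
  congr 1
  rw [← mul_assoc, ← ENNReal.ofReal_mul (abs_nonneg _)]
  have : |(l ^ 3)⁻¹| * |((l⁻¹) ^ 3)⁻¹| = 1 := by
    rw [abs_of_pos (by positivity), abs_of_pos (by positivity)]
    field_simp
  rw [this, ENNReal.ofReal_one, one_mul]

lemma lintegral_scale {l : ℝ} (hl : 0 < l) (g : E3 × E3 → ℝ≥0∞) (hg : Measurable g) :
    (∫⁻ z : E3 × E3, g (l • z.1, l⁻¹ • z.2)) = ∫⁻ z, g z :=
  (measurePreserving_scale hl).lintegral_comp hg

lemma lintegral_smul_E3 {r : ℝ} (hr : r ≠ 0) (g : E3 → ℝ≥0∞) (hg : Measurable g) :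
    (∫⁻ x : E3, g (r • x)) = ENNReal.ofReal |(r ^ 3)⁻¹| * ∫⁻ x, g x := by
  have h := Measure.map_addHaar_smul (volume : Measure E3) hr
  have h3 : Module.finrank ℝ E3 = 3 := finrank_euclideanSpace_fin
  rw [h3] at h
  rw [← lintegral_map hg (measurable_const_smul r), h, lintegral_smul_measure, smul_eq_mul]

lemma gradient_scale (φ : E3 → ℝ) (hφ : ContDiff ℝ 1 φ) (l : ℝ) (x : E3) :
    gradient (fun y => φ (l • y)) x = l • gradient φ (l • x) := by
  have hd : HasGradientAt φ (gradient φ (l • x)) (l • x) :=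
    ((hφ.differentiable one_ne_zero) (l • x)).hasGradientAt
  have hF : HasFDerivAt φ (toDual ℝ E3 (gradient φ (l • x))) (l • x) :=
    hasGradientAt_iff_hasFDerivAt.1 hd
  have hs : HasFDerivAt (fun y : E3 => l • y) (l • ContinuousLinearMap.id ℝ E3) x :=
    (hasFDerivAt_id x).const_smul l
  have hcomp := hF.comp x hs
  have heq : (toDual ℝ E3 (gradient φ (l • x))).comp (l • ContinuousLinearMap.id ℝ E3)
      = toDual ℝ E3 (l • gradient φ (l • x)) := by
    ext w
    simp [toDual_apply_apply, real_inner_smul_left, real_inner_smul_right]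
  rw [heq] at hcomp
  exact (hasGradientAt_iff_hasFDerivAt.2 hcomp).gradient

lemma gradient_continuous (φ : E3 → ℝ) (hφ : ContDiff ℝ 1 φ) : Continuous (gradient φ) := by
  have h : Continuous (fderiv ℝ φ) := hφ.continuous_fderiv one_ne_zero
  exact (toDual ℝ E3).symm.continuous.comp h

lemma gradient_zero_fun (x : E3) : gradient (fun _ : E3 => (0:ℝ)) x = 0 :=
  (hasGradientAt_const x (0:ℝ)).gradient

lemma sqrt_tangent {a b t : ℝ} (ha : 0 < a) (hb : 0 ≤ b) (ht : 0 ≤ t) :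
    Real.sqrt (a + t * b) ≤ Real.sqrt (a + b) + (t - 1) * (b / (2 * Real.sqrt (a + b))) := by
  set s := Real.sqrt (a + b) with hsdef
  have hs : 0 < s := Real.sqrt_pos.2 (by linarith)
  have hs2 : s ^ 2 = a + b := Real.sq_sqrt (by linarith)
  have hbs : b / (2 * s) ≤ s / 2 := by
    rw [div_le_iff₀ (by positivity)]
    nlinarith
  have hR0 : 0 ≤ s + (t - 1) * (b / (2 * s)) := by
    rcases le_or_gt 1 t with h | h
    · have h0 : 0 ≤ (t - 1) * (b / (2 * s)) :=
        mul_nonneg (by linarith) (by positivity)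
      linarith
    · have h1 : (-1) * (b / (2 * s)) ≤ (t - 1) * (b / (2 * s)) :=
        mul_le_mul_of_nonneg_right (by linarith) (by positivity)
      nlinarith
  have key : a + t * b ≤ (s + (t - 1) * (b / (2 * s))) ^ 2 := by
    have hexp : (s + (t - 1) * (b / (2 * s))) ^ 2
        = s ^ 2 + (t - 1) * b + ((t - 1) * (b / (2 * s))) ^ 2 := by
      field_simp
      ring
    rw [hexp, hs2]
    nlinarith [sq_nonneg ((t - 1) * (b / (2 * s)))]
  calc Real.sqrt (a + t * b) ≤ Real.sqrt ((s + (t - 1) * (b / (2 * s))) ^ 2) :=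
        Real.sqrt_le_sqrt key
    _ = s + (t - 1) * (b / (2 * s)) := Real.sqrt_sq hR0

/-- The scaled pair is admissible. -/
lemma admissible_scale {k M J : ℝ} {f : E3 → E3 → ℝ} {φ : E3 → ℝ}
    (hadm : Admissible k M J f φ) {l : ℝ} (hl : 0 < l) :
    Admissible k M J (fun x p => f (l • x) (l⁻¹ • p)) (fun x => φ (l • x)) := by
  obtain ⟨⟨hfmeas, hfpos, hfM, hfJ⟩, ⟨hφ1, hGlt, hvan⟩, hmom⟩ := hadm
  have hmf : Measurable fun z : E3 × E3 => f z.1 z.2 := hfmeas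
  have hT := measurePreserving_scale hl
  have hmT : Measurable fun z : E3 × E3 => (l • z.1, l⁻¹ • z.2) := hT.measurable
  refine ⟨⟨?_, ?_, ?_, ?_⟩, ⟨?_, ?_, ?_⟩, ?_⟩
  · exact hmf.comp hmT
  · -- nonnegativity a.e.
    rw [ae_iff] at hfpos ⊢
    have hset : {z : E3 × E3 | ¬ 0 ≤ f (l • z.1) (l⁻¹ • z.2)}
        = (fun z : E3 × E3 => (l • z.1, l⁻¹ • z.2)) ⁻¹' {z : E3 × E3 | ¬ 0 ≤ f z.1 z.2} := rfl
    have hms : MeasurableSet {z : E3 × E3 | ¬ 0 ≤ f z.1 z.2} := by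
      simp only [not_le]
      exact measurableSet_lt hmf measurable_const
    rw [hset, hT.measure_preimage hms.nullMeasurableSet]
    exact hfpos
  · -- L¹ norm
    have := lintegral_scale hl (fun z : E3 × E3 => ENNReal.ofReal (f z.1 z.2))
      (ENNReal.measurable_ofReal.comp hmf)
    simpa using this.trans hfM
  · -- Lᵖ norm
    have heq : Function.uncurry (fun x p => f (l • x) (l⁻¹ • p))
        = Function.uncurry f ∘ fun z : E3 × E3 => (l • z.1, l⁻¹ • z.2) := rfl
    rw [heq, eLpNorm_comp_measurePreserving hfmeas.aestronglyMeasurable hT]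
    exact hfJ
  · exact hφ1.comp (contDiff_id.const_smul l)
  · -- gradient square integrable
    have hgl : ∀ x : E3, ENNReal.ofReal (‖gradient (fun y => φ (l • y)) x‖ ^ 2)
        = ENNReal.ofReal (l ^ 2) * ENNReal.ofReal (‖gradient φ (l • x)‖ ^ 2) := by
      intro x
      rw [gradient_scale φ hφ1 l x, norm_smul, mul_pow, Real.norm_eq_abs, sq_abs,
        ENNReal.ofReal_mul (by positivity)]
    simp only [hgl]
    rw [lintegral_const_mul' _ _ ENNReal.ofReal_ne_top]
    have hsmul : (∫⁻ x : E3, ENNReal.ofReal (‖gradient φ (l • x)‖ ^ 2))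
        = ENNReal.ofReal |(l ^ 3)⁻¹| * ∫⁻ x : E3, ENNReal.ofReal (‖gradient φ x‖ ^ 2) :=
      lintegral_smul_E3 hl.ne' _ (ENNReal.measurable_ofReal.comp
        (((gradient_continuous φ hφ1).norm.pow 2).measurable))
    rw [hsmul]
    exact ENNReal.mul_lt_top ENNReal.ofReal_lt_top
      (ENNReal.mul_lt_top ENNReal.ofReal_lt_top hGlt)
  · -- vanishing at infinity
    intro a ha
    have hset : {x : E3 | a < |φ (l • x)|} = (fun x : E3 => l • x) ⁻¹' {x : E3 | a < |φ x|} := rfl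
    rw [hset, Measure.addHaar_preimage_smul _ hl.ne']
    exact ENNReal.mul_lt_top ENNReal.ofReal_lt_top (hvan a ha)
  · -- momentum moment finite
    have hmom' : (∫⁻ z : E3 × E3,
        ENNReal.ofReal (Real.sqrt (1 + l ^ 2 * ‖z.2‖ ^ 2) * f z.1 z.2)) < ⊤ := by
      have hptw : ∀ᵐ z : E3 × E3,
          ENNReal.ofReal (Real.sqrt (1 + l ^ 2 * ‖z.2‖ ^ 2) * f z.1 z.2)
            ≤ ENNReal.ofReal (max 1 l) *
              ENNReal.ofReal (Real.sqrt (1 + ‖z.2‖ ^ 2) * f z.1 z.2) := by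
        filter_upwards [hfpos] with z hz
        rw [← ENNReal.ofReal_mul (by positivity)]
        apply ENNReal.ofReal_le_ofReal
        have hc : (0:ℝ) ≤ max 1 l := le_trans zero_le_one (le_max_left _ _)
        have hsq : Real.sqrt (1 + l ^ 2 * ‖z.2‖ ^ 2) ≤ max 1 l * Real.sqrt (1 + ‖z.2‖ ^ 2) := by
          rw [← Real.sqrt_sq hc, ← Real.sqrt_mul (sq_nonneg _)]
          apply Real.sqrt_le_sqrt
          have h1 : (1:ℝ) ≤ (max 1 l) ^ 2 := by
            nlinarith [le_max_left (1:ℝ) l]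
          have h2 : l ^ 2 ≤ (max 1 l) ^ 2 := by
            apply pow_le_pow_left₀ hl.le (le_max_right _ _)
          nlinarith [sq_nonneg ‖z.2‖]
        calc Real.sqrt (1 + l ^ 2 * ‖z.2‖ ^ 2) * f z.1 z.2
            ≤ (max 1 l * Real.sqrt (1 + ‖z.2‖ ^ 2)) * f z.1 z.2 :=
              mul_le_mul_of_nonneg_right hsq hz
          _ = max 1 l * (Real.sqrt (1 + ‖z.2‖ ^ 2) * f z.1 z.2) := by ring
      calc (∫⁻ z : E3 × E3, ENNReal.ofReal (Real.sqrt (1 + l ^ 2 * ‖z.2‖ ^ 2) * f z.1 z.2))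
          ≤ ∫⁻ z : E3 × E3, ENNReal.ofReal (max 1 l) *
              ENNReal.ofReal (Real.sqrt (1 + ‖z.2‖ ^ 2) * f z.1 z.2) := lintegral_mono_ae hptw
        _ = ENNReal.ofReal (max 1 l) *
            ∫⁻ z : E3 × E3, ENNReal.ofReal (Real.sqrt (1 + ‖z.2‖ ^ 2) * f z.1 z.2) :=
            lintegral_const_mul' _ _ ENNReal.ofReal_ne_top
        _ < ⊤ := ENNReal.mul_lt_top ENNReal.ofReal_lt_top hmom
    have hsub : (∫⁻ z : E3 × E3,
        ENNReal.ofReal (Real.sqrt (1 + ‖z.2‖ ^ 2) * f (l • z.1) (l⁻¹ • z.2)))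
        = ∫⁻ z : E3 × E3, ENNReal.ofReal (Real.sqrt (1 + l ^ 2 * ‖z.2‖ ^ 2) * f z.1 z.2) := by
      have hg : Measurable fun z : E3 × E3 =>
          ENNReal.ofReal (Real.sqrt (1 + l ^ 2 * ‖z.2‖ ^ 2) * f z.1 z.2) :=
        ENNReal.measurable_ofReal.comp
          ((by fun_prop : Continuous fun z : E3 × E3 =>
            Real.sqrt (1 + l ^ 2 * ‖z.2‖ ^ 2)).measurable.mul hmf)
      have := lintegral_scale hl _ hg
      rw [← this]
      apply lintegral_congr
      intro z
      simp only
      congr 2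
      rw [norm_smul, mul_pow, Real.norm_eq_abs, sq_abs]
      field_simp
    rw [hsub]
    exact hmom'

/-- Energy of the scaled pair. -/
lemma energy_scale {f : E3 → E3 → ℝ} {φ : E3 → ℝ}
    (hmf : Measurable (Function.uncurry f)) (hφ1 : ContDiff ℝ 1 φ) {l : ℝ} (hl : 0 < l) :
    energy (fun x p => f (l • x) (l⁻¹ • p)) (fun x => φ (l • x))
      = (∫⁻ z : E3 × E3, ENNReal.ofReal
          (Real.sqrt (Real.exp (2 * φ z.1) + l ^ 2 * ‖z.2‖ ^ 2) * f z.1 z.2))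
        + ENNReal.ofReal l⁻¹ * ((∫⁻ x : E3, ENNReal.ofReal (‖gradient φ x‖ ^ 2)) / 2) := by
  have hmf' : Measurable fun z : E3 × E3 => f z.1 z.2 := hmf
  have hφc : Continuous φ := hφ1.continuous
  have hkin : kinE (fun x p => f (l • x) (l⁻¹ • p)) (fun x => φ (l • x))
      = ∫⁻ z : E3 × E3, ENNReal.ofReal
          (Real.sqrt (Real.exp (2 * φ z.1) + l ^ 2 * ‖z.2‖ ^ 2) * f z.1 z.2) := by
    have hg : Measurable fun z : E3 × E3 => ENNReal.ofReal
        (Real.sqrt (Real.exp (2 * φ z.1) + l ^ 2 * ‖z.2‖ ^ 2) * f z.1 z.2) :=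
      ENNReal.measurable_ofReal.comp
        ((by fun_prop : Continuous fun z : E3 × E3 =>
          Real.sqrt (Real.exp (2 * φ z.1) + l ^ 2 * ‖z.2‖ ^ 2)).measurable.mul hmf')
    have := lintegral_scale hl _ hg
    rw [kinE, ← this]
    apply lintegral_congr
    intro z
    simp only
    congr 3
    rw [norm_smul, mul_pow, Real.norm_eq_abs, sq_abs]
    field_simp
  have hgrad : (∫⁻ x : E3, ENNReal.ofReal (‖gradient (fun y => φ (l • y)) x‖ ^ 2))
      = ENNReal.ofReal l⁻¹ * ∫⁻ x : E3, ENNReal.ofReal (‖gradient φ x‖ ^ 2) := by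
    have hgl : ∀ x : E3, ENNReal.ofReal (‖gradient (fun y => φ (l • y)) x‖ ^ 2)
        = ENNReal.ofReal (l ^ 2) * ENNReal.ofReal (‖gradient φ (l • x)‖ ^ 2) := by
      intro x
      rw [gradient_scale φ hφ1 l x, norm_smul, mul_pow, Real.norm_eq_abs, sq_abs,
        ENNReal.ofReal_mul (by positivity)]
    simp only [hgl]
    rw [lintegral_const_mul' _ _ ENNReal.ofReal_ne_top]
    have hsmul : (∫⁻ x : E3, ENNReal.ofReal (‖gradient φ (l • x)‖ ^ 2))
        = ENNReal.ofReal |(l ^ 3)⁻¹| * ∫⁻ x : E3, ENNReal.ofReal (‖gradient φ x‖ ^ 2) :=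
      lintegral_smul_E3 hl.ne' _ (ENNReal.measurable_ofReal.comp
        (((gradient_continuous φ hφ1).norm.pow 2).measurable))
    rw [hsmul, ← mul_assoc, ← ENNReal.ofReal_mul (by positivity)]
    congr 2
    rw [abs_of_pos (by positivity)]
    field_simp
  rw [energy, hkin, hgrad, mul_div_assoc]

/-- the relativistic Virial identity for a minimizer `(f₀,φ₀)`:
`(1/2) ∫ |∇φ₀|² dx = ∫∫ |p|² (e^{2φ₀}+|p|²)^{-1/2} f₀ dp dx`. -/
theorem minimizer_virial (k M J : ℝ)
    (hk : 0 < k) (hk2 : k < 2) (hM : 0 < M) (hJ : 0 < J)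
    (f₀ : E3 → E3 → ℝ) (φ₀ : E3 → ℝ)
    (hadm : Admissible k M J f₀ φ₀)
    (hmin : energy f₀ φ₀ = energyInf k M J) :
    (∫⁻ x : E3, ENNReal.ofReal (‖gradient φ₀ x‖ ^ 2)) / 2
      = ∫⁻ z : E3 × E3,
          ENNReal.ofReal
            (‖z.2‖ ^ 2 / Real.sqrt (Real.exp (2 * φ₀ z.1) + ‖z.2‖ ^ 2) * f₀ z.1 z.2) := by
  obtain ⟨⟨hfmeas, hfpos, hfM, hfJ⟩, ⟨hφ1, hGlt, hvan⟩, hmom⟩ := hadm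
  have hadm' : Admissible k M J f₀ φ₀ := ⟨⟨hfmeas, hfpos, hfM, hfJ⟩, ⟨hφ1, hGlt, hvan⟩, hmom⟩
  have hmf : Measurable fun z : E3 × E3 => f₀ z.1 z.2 := hfmeas
  have hφc : Continuous φ₀ := hφ1.continuous
  set G := ∫⁻ x : E3, ENNReal.ofReal (‖gradient φ₀ x‖ ^ 2) with hGdef
  set V := ∫⁻ z : E3 × E3, ENNReal.ofReal
      (‖z.2‖ ^ 2 / Real.sqrt (Real.exp (2 * φ₀ z.1) + ‖z.2‖ ^ 2) * f₀ z.1 z.2) with hVdef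
  set Kf : ℝ → ℝ≥0∞ := fun t => ∫⁻ z : E3 × E3, ENNReal.ofReal
      (Real.sqrt (Real.exp (2 * φ₀ z.1) + t * ‖z.2‖ ^ 2) * f₀ z.1 z.2) with hKdef
  have mker : ∀ t : ℝ, Measurable fun z : E3 × E3 => ENNReal.ofReal
      (Real.sqrt (Real.exp (2 * φ₀ z.1) + t * ‖z.2‖ ^ 2) * f₀ z.1 z.2) := fun t =>
    ENNReal.measurable_ofReal.comp ((by fun_prop : Continuous fun z : E3 × E3 =>
      Real.sqrt (Real.exp (2 * φ₀ z.1) + t * ‖z.2‖ ^ 2)).measurable.mul hmf)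
  have mK : Measurable fun z : E3 × E3 => ENNReal.ofReal
      (Real.sqrt (Real.exp (2 * φ₀ z.1) + ‖z.2‖ ^ 2) * f₀ z.1 z.2) :=
    ENNReal.measurable_ofReal.comp ((by fun_prop : Continuous fun z : E3 × E3 =>
      Real.sqrt (Real.exp (2 * φ₀ z.1) + ‖z.2‖ ^ 2)).measurable.mul hmf)
  -- finiteness of the minimal energy
  have adm0 : Admissible k M J f₀ (fun _ => 0) := by
    refine ⟨⟨hfmeas, hfpos, hfM, hfJ⟩, ⟨contDiff_const, ?_, ?_⟩, hmom⟩
    · simp [gradient_zero_fun]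
    · intro a ha
      have hset : {x : E3 | a < |(fun _ : E3 => (0:ℝ)) x|} = (∅ : Set E3) := by
        ext x; simp [ha.not_gt]
      rw [hset]
      simp
  have hE0 : energy f₀ (fun _ => 0) < ⊤ := by
    rw [energy]
    have hg0 : (∫⁻ x : E3, ENNReal.ofReal (‖gradient (fun _ : E3 => (0:ℝ)) x‖ ^ 2)) = 0 := by
      simp [gradient_zero_fun]
    have hkin0 : kinE f₀ (fun _ => 0) = ∫⁻ z : E3 × E3,
        ENNReal.ofReal (Real.sqrt (1 + ‖z.2‖ ^ 2) * f₀ z.1 z.2) := by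
      rw [kinE]; simp [Real.exp_zero]
    rw [hg0, hkin0]
    simpa using hmom
  have hEfin : energy f₀ φ₀ < ⊤ := by
    have hle0 : energy f₀ φ₀ ≤ energy f₀ (fun _ => 0) := by
      rw [hmin]; exact sInf_le ⟨f₀, fun _ => 0, adm0, rfl⟩
    exact lt_of_le_of_lt hle0 hE0
  have hKne : kinE f₀ φ₀ ≠ ⊤ := by
    intro h
    rw [energy, h] at hEfin
    simp at hEfin
  have hG2ne : G / 2 ≠ ⊤ := (ENNReal.div_lt_top hGlt.ne (by norm_num)).ne
  have hVle : V ≤ kinE f₀ φ₀ := by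
    rw [hVdef, kinE]
    apply lintegral_mono_ae
    filter_upwards [hfpos] with z hz
    apply ENNReal.ofReal_le_ofReal
    apply mul_le_mul_of_nonneg_right _ hz
    have ha : 0 < Real.exp (2 * φ₀ z.1) := Real.exp_pos _
    have hb : (0:ℝ) ≤ ‖z.2‖ ^ 2 := sq_nonneg _
    have hs : 0 < Real.sqrt (Real.exp (2 * φ₀ z.1) + ‖z.2‖ ^ 2) := Real.sqrt_pos.2 (by linarith)
    rw [div_le_iff₀ hs, Real.mul_self_sqrt (by linarith)]
    linarith
  have hVne : V ≠ ⊤ := (lt_of_le_of_lt hVle (lt_top_iff_ne_top.2 hKne)).ne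
  -- the basic minimality inequality for the scaled pairs
  have hmin' : ∀ l : ℝ, 0 < l →
      kinE f₀ φ₀ + G / 2 ≤ Kf (l ^ 2) + ENNReal.ofReal l⁻¹ * (G / 2) := by
    intro l hl
    have hadm2 := admissible_scale hadm' hl
    have h1 : energy f₀ φ₀ ≤ energy (fun x p => f₀ (l • x) (l⁻¹ • p)) (fun x => φ₀ (l • x)) := by
      rw [hmin]; exact sInf_le ⟨_, _, hadm2, rfl⟩
    rw [energy_scale hfmeas hφ1 hl] at h1
    exact h1
  -- tangent-line upper bound, t ≥ 1
  have htan_ge : ∀ t : ℝ, 1 ≤ t →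
      Kf t ≤ kinE f₀ φ₀ + ENNReal.ofReal ((t - 1) / 2) * V := by
    intro t ht
    have hstep : ∀ᵐ z : E3 × E3, ENNReal.ofReal
        (Real.sqrt (Real.exp (2 * φ₀ z.1) + t * ‖z.2‖ ^ 2) * f₀ z.1 z.2)
        ≤ ENNReal.ofReal (Real.sqrt (Real.exp (2 * φ₀ z.1) + ‖z.2‖ ^ 2) * f₀ z.1 z.2)
          + ENNReal.ofReal ((t - 1) / 2) * ENNReal.ofReal
            (‖z.2‖ ^ 2 / Real.sqrt (Real.exp (2 * φ₀ z.1) + ‖z.2‖ ^ 2) * f₀ z.1 z.2) := by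
      filter_upwards [hfpos] with z hz
      have ha : 0 < Real.exp (2 * φ₀ z.1) := Real.exp_pos _
      have hb : (0:ℝ) ≤ ‖z.2‖ ^ 2 := sq_nonneg _
      rw [← ENNReal.ofReal_mul (by linarith), ← ENNReal.ofReal_add
        (mul_nonneg (Real.sqrt_nonneg _) hz)
        (mul_nonneg (by linarith) (mul_nonneg (div_nonneg hb (Real.sqrt_nonneg _)) hz))]
      apply ENNReal.ofReal_le_ofReal
      have htang := sqrt_tangent ha hb (by linarith : (0:ℝ) ≤ t)
      calc Real.sqrt (Real.exp (2 * φ₀ z.1) + t * ‖z.2‖ ^ 2) * f₀ z.1 z.2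
          ≤ (Real.sqrt (Real.exp (2 * φ₀ z.1) + ‖z.2‖ ^ 2)
              + (t - 1) * (‖z.2‖ ^ 2 / (2 * Real.sqrt (Real.exp (2 * φ₀ z.1) + ‖z.2‖ ^ 2))))
              * f₀ z.1 z.2 := mul_le_mul_of_nonneg_right htang hz
        _ = Real.sqrt (Real.exp (2 * φ₀ z.1) + ‖z.2‖ ^ 2) * f₀ z.1 z.2
            + (t - 1) / 2 * (‖z.2‖ ^ 2 / Real.sqrt (Real.exp (2 * φ₀ z.1) + ‖z.2‖ ^ 2)
              * f₀ z.1 z.2) := by ring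
    calc Kf t ≤ ∫⁻ z : E3 × E3,
          (ENNReal.ofReal (Real.sqrt (Real.exp (2 * φ₀ z.1) + ‖z.2‖ ^ 2) * f₀ z.1 z.2)
            + ENNReal.ofReal ((t - 1) / 2) * ENNReal.ofReal
              (‖z.2‖ ^ 2 / Real.sqrt (Real.exp (2 * φ₀ z.1) + ‖z.2‖ ^ 2) * f₀ z.1 z.2)) :=
        lintegral_mono_ae hstep
      _ = kinE f₀ φ₀ + ∫⁻ z : E3 × E3, ENNReal.ofReal ((t - 1) / 2) * ENNReal.ofReal
            (‖z.2‖ ^ 2 / Real.sqrt (Real.exp (2 * φ₀ z.1) + ‖z.2‖ ^ 2) * f₀ z.1 z.2) :=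
        lintegral_add_left mK _
      _ = kinE f₀ φ₀ + ENNReal.ofReal ((t - 1) / 2) * V := by
        rw [lintegral_const_mul' _ _ ENNReal.ofReal_ne_top]
  -- tangent-line lower bound, t ≤ 1
  have htan_le : ∀ t : ℝ, 0 ≤ t → t ≤ 1 →
      Kf t + ENNReal.ofReal ((1 - t) / 2) * V ≤ kinE f₀ φ₀ := by
    intro t ht0 ht1
    have heq : Kf t + ENNReal.ofReal ((1 - t) / 2) * V = ∫⁻ z : E3 × E3,
        (ENNReal.ofReal (Real.sqrt (Real.exp (2 * φ₀ z.1) + t * ‖z.2‖ ^ 2) * f₀ z.1 z.2)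
          + ENNReal.ofReal ((1 - t) / 2) * ENNReal.ofReal
            (‖z.2‖ ^ 2 / Real.sqrt (Real.exp (2 * φ₀ z.1) + ‖z.2‖ ^ 2) * f₀ z.1 z.2)) := by
      rw [lintegral_add_left (mker t), lintegral_const_mul' _ _ ENNReal.ofReal_ne_top]
    rw [heq]
    apply lintegral_mono_ae
    filter_upwards [hfpos] with z hz
    have ha : 0 < Real.exp (2 * φ₀ z.1) := Real.exp_pos _
    have hb : (0:ℝ) ≤ ‖z.2‖ ^ 2 := sq_nonneg _
    rw [← ENNReal.ofReal_mul (by linarith), ← ENNReal.ofReal_add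
      (mul_nonneg (Real.sqrt_nonneg _) hz)
      (mul_nonneg (by linarith) (mul_nonneg (div_nonneg hb (Real.sqrt_nonneg _)) hz))]
    apply ENNReal.ofReal_le_ofReal
    have htang := sqrt_tangent ha hb ht0
    calc Real.sqrt (Real.exp (2 * φ₀ z.1) + t * ‖z.2‖ ^ 2) * f₀ z.1 z.2
        + (1 - t) / 2 * (‖z.2‖ ^ 2 / Real.sqrt (Real.exp (2 * φ₀ z.1) + ‖z.2‖ ^ 2)
          * f₀ z.1 z.2)
        = (Real.sqrt (Real.exp (2 * φ₀ z.1) + t * ‖z.2‖ ^ 2)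
            + (1 - t) * (‖z.2‖ ^ 2 / (2 * Real.sqrt (Real.exp (2 * φ₀ z.1) + ‖z.2‖ ^ 2))))
            * f₀ z.1 z.2 := by ring
      _ ≤ Real.sqrt (Real.exp (2 * φ₀ z.1) + ‖z.2‖ ^ 2) * f₀ z.1 z.2 := by
        apply mul_le_mul_of_nonneg_right _ hz
        linarith [htang]
  -- real-variable inequalities
  have e1 : (G / 2).toReal = G.toReal / 2 := by
    rw [ENNReal.toReal_div]; norm_num
  have hg0 : 0 ≤ G.toReal := ENNReal.toReal_nonneg
  have hv0 : 0 ≤ V.toReal := ENNReal.toReal_nonneg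
  have hA : ∀ l : ℝ, 1 < l → G.toReal ≤ l * (l + 1) * V.toReal := by
    intro l hl1
    have hl : 0 < l := lt_trans one_pos hl1
    have h1 := hmin' l hl
    have h2 := htan_ge (l ^ 2) (by nlinarith)
    have h3 : kinE f₀ φ₀ + G / 2 ≤ kinE f₀ φ₀
        + (ENNReal.ofReal ((l ^ 2 - 1) / 2) * V + ENNReal.ofReal l⁻¹ * (G / 2)) := by
      calc kinE f₀ φ₀ + G / 2 ≤ Kf (l ^ 2) + ENNReal.ofReal l⁻¹ * (G / 2) := h1
        _ ≤ (kinE f₀ φ₀ + ENNReal.ofReal ((l ^ 2 - 1) / 2) * V)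
            + ENNReal.ofReal l⁻¹ * (G / 2) := add_le_add_left h2 _
        _ = _ := by rw [add_assoc]
    have h4 := (ENNReal.add_le_add_iff_left hKne).1 h3
    have hfin1 : ENNReal.ofReal ((l ^ 2 - 1) / 2) * V ≠ ⊤ :=
      ENNReal.mul_ne_top ENNReal.ofReal_ne_top hVne
    have hfin2 : ENNReal.ofReal l⁻¹ * (G / 2) ≠ ⊤ :=
      ENNReal.mul_ne_top ENNReal.ofReal_ne_top hG2ne
    have h5 := ENNReal.toReal_mono (ENNReal.add_ne_top.2 ⟨hfin1, hfin2⟩) h4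
    rw [ENNReal.toReal_add hfin1 hfin2, ENNReal.toReal_mul, ENNReal.toReal_mul,
      ENNReal.toReal_ofReal (by nlinarith), ENNReal.toReal_ofReal (by positivity), e1] at h5
    have h5' : l * (G.toReal / 2) ≤ l * ((l ^ 2 - 1) / 2 * V.toReal) + G.toReal / 2 := by
      have hmul := mul_le_mul_of_nonneg_left h5 hl.le
      calc l * (G.toReal / 2)
          ≤ l * ((l ^ 2 - 1) / 2 * V.toReal + l⁻¹ * (G.toReal / 2)) := hmul
        _ = l * ((l ^ 2 - 1) / 2 * V.toReal) + l * l⁻¹ * (G.toReal / 2) := by ring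
        _ = l * ((l ^ 2 - 1) / 2 * V.toReal) + G.toReal / 2 := by
            rw [mul_inv_cancel₀ hl.ne']; ring
    nlinarith [hv0, hg0]
  have hB : ∀ l : ℝ, 0 < l → l < 1 → l * (l + 1) * V.toReal ≤ G.toReal := by
    intro l hl hl1
    have h1 := hmin' l hl
    have h2 := htan_le (l ^ 2) (by positivity) (by nlinarith)
    have h3 : kinE f₀ φ₀ + (G / 2 + ENNReal.ofReal ((1 - l ^ 2) / 2) * V)
        ≤ kinE f₀ φ₀ + ENNReal.ofReal l⁻¹ * (G / 2) := by
      calc kinE f₀ φ₀ + (G / 2 + ENNReal.ofReal ((1 - l ^ 2) / 2) * V)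
          = (kinE f₀ φ₀ + G / 2) + ENNReal.ofReal ((1 - l ^ 2) / 2) * V := by
            rw [add_assoc]
        _ ≤ (Kf (l ^ 2) + ENNReal.ofReal l⁻¹ * (G / 2))
            + ENNReal.ofReal ((1 - l ^ 2) / 2) * V := add_le_add_left h1 _
        _ = (Kf (l ^ 2) + ENNReal.ofReal ((1 - l ^ 2) / 2) * V)
            + ENNReal.ofReal l⁻¹ * (G / 2) := by ring
        _ ≤ kinE f₀ φ₀ + ENNReal.ofReal l⁻¹ * (G / 2) := add_le_add_left h2 _
    have h4 := (ENNReal.add_le_add_iff_left hKne).1 h3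
    have hfin1 : ENNReal.ofReal ((1 - l ^ 2) / 2) * V ≠ ⊤ :=
      ENNReal.mul_ne_top ENNReal.ofReal_ne_top hVne
    have hfin2 : ENNReal.ofReal l⁻¹ * (G / 2) ≠ ⊤ :=
      ENNReal.mul_ne_top ENNReal.ofReal_ne_top hG2ne
    have h5 := ENNReal.toReal_mono hfin2 h4
    rw [ENNReal.toReal_add hG2ne hfin1, ENNReal.toReal_mul, ENNReal.toReal_mul,
      ENNReal.toReal_ofReal (by nlinarith), ENNReal.toReal_ofReal (by positivity), e1] at h5
    have h5' : l * (G.toReal / 2) + l * ((1 - l ^ 2) / 2 * V.toReal) ≤ G.toReal / 2 := by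
      have hmul := mul_le_mul_of_nonneg_left h5 hl.le
      calc l * (G.toReal / 2) + l * ((1 - l ^ 2) / 2 * V.toReal)
          = l * (G.toReal / 2 + (1 - l ^ 2) / 2 * V.toReal) := by ring
        _ ≤ l * (l⁻¹ * (G.toReal / 2)) := hmul
        _ = l * l⁻¹ * (G.toReal / 2) := by ring
        _ = G.toReal / 2 := by rw [mul_inv_cancel₀ hl.ne']; ring
    nlinarith [hv0, hg0]
  -- pass to the limit l → 1
  have hcont : Continuous fun l : ℝ => l * (l + 1) * V.toReal := by fun_prop
  have htends : Tendsto (fun l : ℝ => l * (l + 1) * V.toReal) (𝓝 (1:ℝ))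
      (𝓝 (2 * V.toReal)) := by
    have h := hcont.tendsto 1
    have : (1:ℝ) * (1 + 1) * V.toReal = 2 * V.toReal := by ring
    rwa [this] at h
  have h2v : G.toReal ≤ 2 * V.toReal := by
    refine ge_of_tendsto (htends.mono_left nhdsWithin_le_nhds :
      Tendsto _ (𝓝[>] (1:ℝ)) _) ?_
    filter_upwards [self_mem_nhdsWithin] with l hl
    exact hA l hl
  have hv2 : 2 * V.toReal ≤ G.toReal := by
    refine le_of_tendsto (htends.mono_left nhdsWithin_le_nhds :
      Tendsto _ (𝓝[<] (1:ℝ)) _) ?_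
    have hev : ∀ᶠ l in 𝓝[<] (1:ℝ), (0:ℝ) < l :=
      (eventually_gt_nhds one_pos).filter_mono nhdsWithin_le_nhds
    filter_upwards [self_mem_nhdsWithin, hev] with l hl hl0
    exact hB l hl0 hl
  have hgv : (G / 2).toReal = V.toReal := by
    rw [e1]
    linarith
  exact (ENNReal.toReal_eq_toReal_iff' hG2ne hVne).1 hgv
end
end

section
/- Weak lower semicontinuity of the energy: let (fₙ,φₙ) be a sequence of admissible pairs, let f₀ : ℝ³×ℝ³ → ℝ be measurable, nonnegative a.e. and in L^{1+1/k}, and let φ₀ be a potential with φ₀ ≤ 0 a.e. Assume: (i) fₙ converges to f₀ weakly in L^{1+1/k}, i.e. ∫∫ fₙ g dp dx → ∫∫ f₀ g dp dx for every g ∈ L^{1+k}(ℝ⁶); (ii) φₙ(x) → φ₀(x) for almost every x ∈ ℝ³; (iii) ∇φₙ converges to ∇φ₀ weakly in L²(ℝ³;ℝ³). Then liminf_{n→∞} 𝓔(fₙ,φₙ) ≥ 𝓔(f₀,φ₀). -/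
open MeasureTheory Real Filter Topology
open scoped ENNReal

noncomputable section

section Helpers

lemma conj_exp {k : ℝ} (hk : 0 < k) : (1 + 1/k).HolderConjugate (1 + k) := by
  rw [Real.holderConjugate_iff]
  constructor
  · have : 0 < 1/k := by positivity
    linarith
  · field_simp
    ring

lemma ofReal_sq_norm {F : Type*} [NormedAddCommGroup F] (v : F) :
    ENNReal.ofReal (‖v‖ ^ 2) = (‖v‖₊ : ℝ≥0∞) ^ (2 : ℝ) := by
  rw [ENNReal.ofReal_pow (norm_nonneg v), ofReal_norm_eq_enorm, enorm_eq_nnnorm,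
    ← ENNReal.rpow_natCast]
  norm_num

lemma continuous_gradient {φ : E3 → ℝ} (h : ContDiff ℝ 1 φ) : Continuous (gradient φ) := by
  have : Continuous fun x => fderiv ℝ φ x := h.continuous_fderiv one_ne_zero
  exact (InnerProductSpace.toDual ℝ E3).symm.continuous.comp this

lemma memLp_gradient {φ : E3 → ℝ} (h1 : ContDiff ℝ 1 φ)
    (h2 : (∫⁻ x : E3, ENNReal.ofReal (‖gradient φ x‖ ^ 2)) < ⊤) :
    MemLp (gradient φ) 2 volume := by
  refine ⟨(continuous_gradient h1).aestronglyMeasurable, ?_⟩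
  rw [eLpNorm_eq_lintegral_rpow_enorm_toReal (by norm_num) (by norm_num)]
  have : ∀ x : E3, (‖gradient φ x‖₊ : ℝ≥0∞) ^ ((2:ℝ≥0∞).toReal) =
      ENNReal.ofReal (‖gradient φ x‖ ^ 2) := by
    intro x; rw [ofReal_sq_norm]; norm_num
  simp only [enorm_eq_nnnorm, this]
  exact ENNReal.rpow_lt_top_of_nonneg (by norm_num) h2.ne

lemma lintegral_sq_eq_rpow (g : E3 → E3) :
    (∫⁻ x : E3, ENNReal.ofReal (‖g x‖ ^ 2)) = (eLpNorm g 2 volume) ^ (2 : ℝ) := by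
  rw [eLpNorm_eq_lintegral_rpow_enorm_toReal two_ne_zero ENNReal.ofNat_ne_top]
  have h2 : ∀ x : E3, ENNReal.ofReal (‖g x‖ ^ 2) = (‖g x‖₊ : ℝ≥0∞) ^ ((2:ℝ≥0∞).toReal) := by
    intro x; rw [ofReal_sq_norm]; norm_num
  simp_rw [h2, enorm_eq_nnnorm]
  rw [← ENNReal.rpow_mul]
  norm_num

lemma grad_lsc (g : ℕ → E3 → E3) (g₀ : E3 → E3)
    (hn : ∀ n, MemLp (g n) 2 (volume : Measure E3)) (h0 : MemLp g₀ 2 volume)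
    (hw : Tendsto (fun n => ∫ x : E3, (inner ℝ (g n x) (g₀ x) : ℝ)) atTop
      (nhds (∫ x : E3, (inner ℝ (g₀ x) (g₀ x) : ℝ)))) :
    (∫⁻ x : E3, ENNReal.ofReal (‖g₀ x‖ ^ 2)) ≤
      liminf (fun n => ∫⁻ x : E3, ENNReal.ofReal (‖g n x‖ ^ 2)) atTop := by
  set L0 := ∫⁻ x : E3, ENNReal.ofReal (‖g₀ x‖ ^ 2) with hL0
  set Ln := fun n => ∫⁻ x : E3, ENNReal.ofReal (‖g n x‖ ^ 2) with hLn
  set A := (eLpNorm g₀ 2 volume).toReal with hA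
  set a := fun n => (eLpNorm (g n) 2 volume).toReal with ha
  have hL0fin : L0 ≠ ⊤ := by
    rw [hL0, lintegral_sq_eq_rpow]
    exact (ENNReal.rpow_lt_top_of_nonneg (by norm_num) h0.eLpNorm_ne_top).ne
  have hLnfin : ∀ n, Ln n ≠ ⊤ := fun n => by
    show (∫⁻ x : E3, ENNReal.ofReal (‖g n x‖ ^ 2)) ≠ ⊤
    rw [lintegral_sq_eq_rpow]
    exact (ENNReal.rpow_lt_top_of_nonneg (by norm_num) (hn n).eLpNorm_ne_top).ne
  -- Cauchy-Schwarz
  have hCS : ∀ n, (∫ x : E3, (inner ℝ (g n x) (g₀ x) : ℝ)) ≤ a n * A := by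
    intro n
    have h1 : (∫ x : E3, (inner ℝ (g n x) (g₀ x) : ℝ)) =
        @inner ℝ _ _ ((hn n).toLp (g n)) (h0.toLp g₀) := by
      rw [MeasureTheory.L2.inner_def]
      refine integral_congr_ae ?_
      filter_upwards [(hn n).coeFn_toLp, h0.coeFn_toLp] with x h1 h2
      rw [h1, h2]
    rw [h1]
    calc @inner ℝ _ _ ((hn n).toLp (g n)) (h0.toLp g₀)
        ≤ ‖(hn n).toLp (g n)‖ * ‖h0.toLp g₀‖ := real_inner_le_norm _ _
      _ = a n * A := by rw [Lp.norm_toLp, Lp.norm_toLp]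
  -- limit identification
  have hlim : Tendsto (fun n => ∫ x : E3, (inner ℝ (g n x) (g₀ x) : ℝ)) atTop (nhds (A^2)) := by
    convert hw using 2
    have h1 : (∫ x : E3, (inner ℝ (g₀ x) (g₀ x) : ℝ)) =
        @inner ℝ _ _ (h0.toLp g₀) (h0.toLp g₀) := by
      rw [MeasureTheory.L2.inner_def]
      refine integral_congr_ae ?_
      filter_upwards [h0.coeFn_toLp] with x h2
      rw [h2]
    rw [h1, real_inner_self_eq_norm_sq, Lp.norm_toLp]
  rcases eq_or_ne L0 0 with h | h
  · rw [h]; exact zero_le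
  have hApos : 0 < A := by
    rw [hA]
    refine ENNReal.toReal_pos (fun hc => h ?_) h0.eLpNorm_ne_top
    rw [hL0, lintegral_sq_eq_rpow, hc]
    simp
  rw [le_liminf_iff]
  intro y hy
  have hyt : y ≠ ⊤ := hy.trans_le le_top |>.ne
  set y' := max y.toReal 0 with hy'
  have hy'lt : y' < A^2 := by
    have hT : L0.toReal = A^2 := by
      rw [hL0, lintegral_sq_eq_rpow, ← ENNReal.toReal_rpow]
      rw [← Real.rpow_natCast A 2]
      norm_num
      rfl
    have h1 : y.toReal < L0.toReal := ENNReal.toReal_lt_toReal hyt hL0fin |>.mpr hy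
    have h2 : (0:ℝ) < L0.toReal := ENNReal.toReal_pos h hL0fin
    rw [hT] at h1 h2
    exact max_lt h1 h2
  set c := (Real.sqrt y' * A + A^2)/2 with hc
  have hsq : Real.sqrt y' < A := by
    nlinarith [Real.sq_sqrt (le_max_right y.toReal 0), Real.sqrt_nonneg y',
      Real.sqrt_lt_sqrt (le_max_right y.toReal 0) hy'lt, Real.sqrt_sq hApos.le]
  have hclt : c < A^2 := by nlinarith
  have hcgt : Real.sqrt y' * A < c := by nlinarith
  filter_upwards [hlim.eventually (eventually_gt_nhds hclt)] with n hcn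
  have han : Real.sqrt y' < a n := by
    have : Real.sqrt y' * A < a n * A := lt_of_lt_of_le (hcgt.trans hcn) (hCS n)
    exact lt_of_mul_lt_mul_right this hApos.le
  have hy'an : y' < (a n)^2 := by
    nlinarith [Real.sq_sqrt (le_max_right y.toReal 0), Real.sqrt_nonneg y']
  have hLnval : Ln n = ENNReal.ofReal ((a n)^2) := by
    have h1 : ENNReal.ofReal ((a n)^2) = (eLpNorm (g n) 2 volume) ^ (2:ℝ) := by
      simp only [ha]
      rw [ENNReal.ofReal_pow ENNReal.toReal_nonneg,
        ENNReal.ofReal_toReal (hn n).eLpNorm_ne_top, ← ENNReal.rpow_natCast]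
      norm_num
    rw [h1]
    show (∫⁻ x : E3, ENNReal.ofReal (‖g n x‖ ^ 2)) = _
    exact lintegral_sq_eq_rpow (g n)
  have hpos : (0:ℝ) < (a n)^2 := by nlinarith [Real.sqrt_nonneg y']
  have : y < (fun n => ∫⁻ (x : E3), ENNReal.ofReal (‖g n x‖ ^ 2)) n := by
    rw [show (fun n => ∫⁻ (x : E3), ENNReal.ofReal (‖g n x‖ ^ 2)) n = Ln n from rfl,
      hLnval, ← ENNReal.ofReal_toReal hyt]
    exact ENNReal.ofReal_lt_ofReal_iff hpos |>.mpr
      (lt_of_le_of_lt (le_max_left _ _) hy'an)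
  exact this

lemma sqrt_add_le' (a b : ℝ) (ha : 0 ≤ a) (hb : 0 ≤ b) :
    Real.sqrt (a + b) ≤ Real.sqrt a + Real.sqrt b := by
  have h1 : a + b ≤ (Real.sqrt a + Real.sqrt b)^2 := by
    nlinarith [Real.sq_sqrt ha, Real.sq_sqrt hb, Real.sqrt_nonneg a, Real.sqrt_nonneg b]
  calc Real.sqrt (a+b) ≤ Real.sqrt ((Real.sqrt a + Real.sqrt b)^2) := Real.sqrt_le_sqrt h1
    _ = Real.sqrt a + Real.sqrt b := Real.sqrt_sq (by positivity)

lemma enn_conj {k : ℝ} (hk : 0 < k) :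
    1 / (1:ℝ≥0∞) = 1 / ENNReal.ofReal (1+1/k) + 1 / ENNReal.ofReal (1+k) := by
  have h1 : (0:ℝ) < 1+k := by linarith
  have h2 : (0:ℝ) < 1+1/k := by positivity
  have h3 : (1+k)⁻¹ + (1+1/k)⁻¹ = 1 := by
    field_simp
    ring
  have e2 : 1 / ENNReal.ofReal (1+1/k) = ENNReal.ofReal ((1+1/k)⁻¹) := by
    rw [one_div, ← ENNReal.ofReal_inv_of_pos h2]
  have e1 : 1 / ENNReal.ofReal (1+k) = ENNReal.ofReal ((1+k)⁻¹) := by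
    rw [one_div, ← ENNReal.ofReal_inv_of_pos h1]
  rw [e1, e2, ← ENNReal.ofReal_add (by positivity) (by positivity), add_comm ((1+1/k)⁻¹), h3]
  simp

lemma integrable_mul_mem {k : ℝ} (hk : 0 < k) (h g : E3 × E3 → ℝ)
    (hh : MemLp h (ENNReal.ofReal (1+1/k)) volume)
    (hg : MemLp g (ENNReal.ofReal (1+k)) volume) :
    Integrable (fun z => h z * g z) volume := by
  have h2 := hg.smul hh (r := 1) (hpqr := ⟨by simpa only [one_div, inv_one] using (enn_conj hk).symm⟩)
  rw [memLp_one_iff_integrable] at h2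
  have h3 : (h • g) = fun z => h z * g z := rfl
  rw [h3] at h2
  exact h2


lemma enn_le_liminf_add {u v : ℕ → ℝ≥0∞} :
    liminf u atTop + liminf v atTop ≤ liminf (fun n => u n + v n) atTop := by
  rw [liminf_eq_iSup_iInf_of_nat, liminf_eq_iSup_iInf_of_nat, liminf_eq_iSup_iInf_of_nat]
  have hm : ∀ w : ℕ → ℝ≥0∞, Monotone (fun n => ⨅ i ≥ n, w i) := by
    intro w n n' h
    exact le_iInf₂ fun m hm => iInf₂_le m (le_trans h hm)
  rw [ENNReal.iSup_add_iSup_of_monotone (hm u) (hm v)]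
  exact iSup_mono fun n => le_iInf₂ fun m hm' =>
    add_le_add (iInf₂_le m hm') (iInf₂_le m hm')

lemma ae_fst {Q : E3 → Prop} (h : ∀ᵐ x : E3, Q x) : ∀ᵐ z : E3 × E3, Q z.1 := by
  rw [ae_iff] at h ⊢
  have hset : {z : E3 × E3 | ¬Q z.1} = {x : E3 | ¬Q x} ×ˢ (Set.univ : Set E3) := by
    ext z; simp
  rw [show (volume : Measure (E3 × E3)) = (volume : Measure E3).prod volume from rfl,
    hset, Measure.prod_prod, h, zero_mul]

lemma kin_lsc {k J : ℝ} (hk : 0 < k) (hJ : 0 < J)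
    (f : ℕ → E3 → E3 → ℝ) (φ : ℕ → E3 → ℝ)
    (hfm : ∀ n, Measurable (Function.uncurry (f n)))
    (hfpos : ∀ n, ∀ᵐ z : E3 × E3, 0 ≤ f n z.1 z.2)
    (hfJ : ∀ n, eLpNorm (Function.uncurry (f n)) (ENNReal.ofReal (1 + 1/k)) volume
      ≤ ENNReal.ofReal J)
    (hφc : ∀ n, Continuous (φ n))
    (f₀ : E3 → E3 → ℝ) (φ₀ : E3 → ℝ)
    (hf₀meas : Measurable (Function.uncurry f₀))
    (hf₀pos : ∀ᵐ z : E3 × E3, 0 ≤ f₀ z.1 z.2)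
    (hf₀Lp : MemLp (Function.uncurry f₀) (ENNReal.ofReal (1 + 1/k)) volume)
    (hφ₀c : Continuous φ₀)
    (hweakf : ∀ g : E3 × E3 → ℝ, MemLp g (ENNReal.ofReal (1 + k)) volume →
      Tendsto (fun n => ∫ z : E3 × E3, f n z.1 z.2 * g z) atTop
        (nhds (∫ z : E3 × E3, f₀ z.1 z.2 * g z)))
    (haeφ : ∀ᵐ x : E3, Tendsto (fun n => φ n x) atTop (nhds (φ₀ x))) :
    (∫⁻ z : E3 × E3, ENNReal.ofReal (Real.sqrt (Real.exp (2 * φ₀ z.1) + ‖z.2‖ ^ 2) * f₀ z.1 z.2))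
      ≤ liminf (fun n => ∫⁻ z : E3 × E3,
          ENNReal.ofReal (Real.sqrt (Real.exp (2 * φ n z.1) + ‖z.2‖ ^ 2) * f n z.1 z.2)) atTop := by
  have hk1 : (0:ℝ) < 1 + 1/k := by positivity
  have hk2 : (0:ℝ) < 1 + k := by linarith
  set w : (E3 → ℝ) → E3 × E3 → ℝ :=
    fun ψ z => Real.sqrt (Real.exp (2 * ψ z.1) + ‖z.2‖ ^ 2) with hwdef
  set K : ℕ → ℝ≥0∞ :=
    fun n => ∫⁻ z : E3 × E3, ENNReal.ofReal (w (φ n) z * f n z.1 z.2) with hK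
  have hwcont : ∀ ψ : E3 → ℝ, Continuous ψ → Continuous (w ψ) := fun ψ hψ =>
    Real.continuous_sqrt.comp
      ((Real.continuous_exp.comp (continuous_const.mul (hψ.comp continuous_fst))).add
        ((continuous_norm.comp continuous_snd).pow 2))
  have hwnn : ∀ ψ z, 0 ≤ w ψ z := fun ψ z => Real.sqrt_nonneg _
  set s : ℕ → Set (E3 × E3) := fun R => Metric.closedBall 0 R with hs
  have hsm : ∀ R, MeasurableSet (s R) := fun R => measurableSet_closedBall
  have hsv : ∀ R, volume (s R) < ⊤ := fun R => measure_closedBall_lt_top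
  set g : ℕ → E3 × E3 → ℝ :=
    fun R => (s R).indicator (fun z => min (w φ₀ z) R) with hg
  have hgmeas : ∀ R, Measurable (g R) := fun R =>
    (((hwcont φ₀ hφ₀c).min continuous_const).measurable).indicator (hsm R)
  have hgnn : ∀ R z, 0 ≤ g R z := fun R z =>
    Set.indicator_nonneg (fun z _ => le_min (hwnn φ₀ z) (Nat.cast_nonneg R)) z
  have hglew : ∀ R z, g R z ≤ w φ₀ z := by
    intro R z
    by_cases hz : z ∈ s R
    · rw [hg]; simp only [Set.indicator_of_mem hz]; exact min_le_left _ _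
    · rw [hg]; simp only [Set.indicator_of_notMem hz]; exact hwnn φ₀ z
  have hgmem : ∀ R, MemLp (g R) (ENNReal.ofReal (1 + k)) volume := by
    intro R
    rw [hg, memLp_indicator_iff_restrict (hsm R)]
    haveI : IsFiniteMeasure ((volume : Measure (E3 × E3)).restrict (s R)) :=
      ⟨by rw [Measure.restrict_apply_univ]; exact hsv R⟩
    refine MemLp.of_bound
      (((hwcont φ₀ hφ₀c).min continuous_const).aestronglyMeasurable.restrict) (R:ℝ) ?_
    refine ae_of_all _ fun z => ?_
    rw [Real.norm_eq_abs, abs_of_nonneg (le_min (hwnn φ₀ z) (Nat.cast_nonneg R))]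
    exact min_le_right _ _
  have hfnmem : ∀ n, MemLp (Function.uncurry (f n)) (ENNReal.ofReal (1 + 1/k)) volume :=
    fun n => ⟨(hfm n).aestronglyMeasurable, lt_of_le_of_lt (hfJ n) ENNReal.ofReal_lt_top⟩
  -- the key per-R estimate
  have key : ∀ R : ℕ,
      (∫⁻ z : E3 × E3, ENNReal.ofReal (f₀ z.1 z.2 * g R z)) ≤ liminf K atTop := by
    intro R
    set d : ℕ → E3 → ℝ := fun n x =>
      Real.sqrt (max (Real.exp (2 * φ₀ x) - Real.exp (2 * φ n x)) 0) with hd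
    set e : ℕ → E3 × E3 → ℝ :=
      fun n => (s R).indicator (fun z => min (R:ℝ) (d n z.1)) with he
    have hdnn : ∀ n x, 0 ≤ d n x := fun n x => Real.sqrt_nonneg _
    have henn : ∀ n z, 0 ≤ e n z := fun n z =>
      Set.indicator_nonneg (fun z _ => le_min (Nat.cast_nonneg R) (hdnn n z.1)) z
    have hdcont : ∀ n, Continuous (d n) := fun n =>
      Real.continuous_sqrt.comp
        (((Real.continuous_exp.comp (continuous_const.mul hφ₀c)).sub
          (Real.continuous_exp.comp (continuous_const.mul (hφc n)))).max continuous_const)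
    have hemeas : ∀ n, Measurable (e n) := fun n =>
      ((continuous_const.min ((hdcont n).comp continuous_fst)).measurable).indicator (hsm R)
    have heleR : ∀ n z, e n z ≤ (R:ℝ) := by
      intro n z
      by_cases hz : z ∈ s R
      · rw [he]; simp only [Set.indicator_of_mem hz]; exact min_le_left _ _
      · rw [he]; simp only [Set.indicator_of_notMem hz]; exact Nat.cast_nonneg R
    have hpt : ∀ n z, g R z ≤ w (φ n) z + e n z := by
      intro n z
      by_cases hz : z ∈ s R
      · rw [hg, he]
        simp only [Set.indicator_of_mem hz]
        have h1 : w φ₀ z ≤ w (φ n) z + d n z.1 := by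
          have hle : Real.exp (2 * φ₀ z.1) + ‖z.2‖ ^ 2 ≤
              (Real.exp (2 * φ n z.1) + ‖z.2‖ ^ 2) +
                max (Real.exp (2 * φ₀ z.1) - Real.exp (2 * φ n z.1)) 0 := by
            have := le_max_left (Real.exp (2 * φ₀ z.1) - Real.exp (2 * φ n z.1)) (0:ℝ)
            linarith
          calc w φ₀ z ≤ Real.sqrt ((Real.exp (2 * φ n z.1) + ‖z.2‖ ^ 2) +
                max (Real.exp (2 * φ₀ z.1) - Real.exp (2 * φ n z.1)) 0) :=
              Real.sqrt_le_sqrt hle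
            _ ≤ w (φ n) z + d n z.1 :=
              sqrt_add_le' _ _ (by positivity) (le_max_right _ 0)
        rcases le_total (d n z.1) (R:ℝ) with hdr | hdr
        · rw [min_eq_right hdr]
          exact le_trans (min_le_left _ _) h1
        · rw [min_eq_left hdr]
          exact le_trans (min_le_right _ _) (le_add_of_nonneg_left (hwnn (φ n) z))
      · rw [hg, he]
        simp only [Set.indicator_of_notMem hz]
        rw [add_zero]
        exact hwnn (φ n) z
    have hsplit : ∀ n, (∫⁻ z : E3 × E3, ENNReal.ofReal (f n z.1 z.2 * g R z)) ≤
        K n + ∫⁻ z : E3 × E3, ENNReal.ofReal (e n z * f n z.1 z.2) := by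
      intro n
      have hm1 : Measurable fun z : E3 × E3 => ENNReal.ofReal (w (φ n) z * f n z.1 z.2) :=
        (((hwcont (φ n) (hφc n)).measurable).mul (hfm n)).ennreal_ofReal
      show _ ≤ (∫⁻ z : E3 × E3, ENNReal.ofReal (w (φ n) z * f n z.1 z.2)) + _
      rw [← lintegral_add_left hm1]
      refine lintegral_mono_ae ?_
      filter_upwards [hfpos n] with z hz
      rw [mul_comm (w (φ n) z), mul_comm (e n z),
        ← ENNReal.ofReal_add (mul_nonneg hz (hwnn (φ n) z)) (mul_nonneg hz (henn n z)),
        ← mul_add]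
      exact ENNReal.ofReal_le_ofReal (mul_le_mul_of_nonneg_left (hpt n z) hz)
    set T : ℕ → ℝ≥0∞ :=
      fun n => ∫⁻ z : E3 × E3, ENNReal.ofReal ((e n z) ^ (1+k)) with hT
    have hE : ∀ n, (∫⁻ z : E3 × E3, ENNReal.ofReal (e n z * f n z.1 z.2)) ≤
        ENNReal.ofReal J * (T n) ^ (1/(1+k)) := by
      intro n
      have hmul : ∀ z : E3 × E3, ENNReal.ofReal (e n z * f n z.1 z.2) =
          ENNReal.ofReal (f n z.1 z.2) * ENNReal.ofReal (e n z) := fun z => by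
        rw [ENNReal.ofReal_mul (henn n z), mul_comm]
      have hHol := ENNReal.lintegral_mul_le_Lp_mul_Lq volume (conj_exp hk)
        ((hfm n).ennreal_ofReal.aemeasurable) ((hemeas n).ennreal_ofReal.aemeasurable)
      have hf1 : (∫⁻ z : E3 × E3, (ENNReal.ofReal (f n z.1 z.2)) ^ (1+1/k)) ^ (1/(1+1/k)) ≤
          ENNReal.ofReal J := by
        refine le_trans ?_ (hfJ n)
        rw [eLpNorm_eq_lintegral_rpow_enorm_toReal
          (ne_of_gt (ENNReal.ofReal_pos.mpr hk1))
          ENNReal.ofReal_ne_top, ENNReal.toReal_ofReal hk1.le]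
        refine ENNReal.rpow_le_rpow ?_ (one_div_nonneg.mpr hk1.le)
        refine lintegral_mono fun z => ?_
        exact ENNReal.rpow_le_rpow (Real.ofReal_le_enorm _) hk1.le
      have hf2 : (∫⁻ z : E3 × E3, (ENNReal.ofReal (e n z)) ^ (1+k)) ^ (1/(1+k)) =
          (T n) ^ (1/(1+k)) := by
        congr 1
        refine lintegral_congr fun z => ?_
        rw [ENNReal.ofReal_rpow_of_nonneg (henn n z) (by positivity)]
      calc (∫⁻ z : E3 × E3, ENNReal.ofReal (e n z * f n z.1 z.2))
          = ∫⁻ z : E3 × E3, ENNReal.ofReal (f n z.1 z.2) * ENNReal.ofReal (e n z) :=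
            lintegral_congr hmul
        _ ≤ (∫⁻ z : E3 × E3, (ENNReal.ofReal (f n z.1 z.2)) ^ (1+1/k)) ^ (1/(1+1/k)) *
              (∫⁻ z : E3 × E3, (ENNReal.ofReal (e n z)) ^ (1+k)) ^ (1/(1+k)) := hHol
        _ ≤ ENNReal.ofReal J * (T n) ^ (1/(1+k)) := by
            rw [hf2]
            exact mul_le_mul_left hf1 _
    have hTtend : Tendsto T atTop (nhds 0) := by
      have h0 : Tendsto T atTop (nhds (∫⁻ _ : E3 × E3, 0)) := by
        refine tendsto_lintegral_of_dominated_convergence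
          ((s R).indicator (fun _ => ENNReal.ofReal ((R:ℝ) ^ (1+k))))
          (fun n => (((continuous_id.rpow_const
            (fun x => Or.inr (by positivity : (0:ℝ) ≤ 1+k))).measurable.comp
            (hemeas n)).ennreal_ofReal)) ?_ ?_ ?_
        · intro n
          refine ae_of_all _ fun z => ?_
          by_cases hz : z ∈ s R
          · rw [Set.indicator_of_mem hz]
            exact ENNReal.ofReal_le_ofReal
              (Real.rpow_le_rpow (henn n z) (heleR n z) (by positivity))
          · rw [Set.indicator_of_notMem hz, he]
            simp only [Set.indicator_of_notMem hz]
            rw [Real.zero_rpow (by positivity : (1:ℝ)+k ≠ 0)]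
            simp
        · rw [lintegral_indicator (hsm R), setLIntegral_const]
          exact (ENNReal.mul_lt_top ENNReal.ofReal_lt_top (hsv R)).ne
        · filter_upwards [ae_fst haeφ] with z hz
          by_cases hzR : z ∈ s R
          · have h1 : Tendsto (fun n => Real.exp (2 * φ n z.1)) atTop
                (nhds (Real.exp (2 * φ₀ z.1))) :=
              (Real.continuous_exp.continuousAt.tendsto).comp (hz.const_mul 2)
            have h2 : Tendsto (fun n =>
                max (Real.exp (2 * φ₀ z.1) - Real.exp (2 * φ n z.1)) 0) atTop (nhds 0) := by
              have := ((tendsto_const_nhds : Tendsto (fun _ : ℕ => Real.exp (2 * φ₀ z.1))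
                  atTop (nhds (Real.exp (2 * φ₀ z.1)))).sub h1).max
                (tendsto_const_nhds : Tendsto (fun _ : ℕ => (0:ℝ)) atTop (nhds 0))
              simpa using this
            have h3 : Tendsto (fun n => d n z.1) atTop (nhds 0) := by
              have := (Real.continuous_sqrt.continuousAt.tendsto).comp h2
              simpa [hd, Function.comp_def] using this
            have h4 : Tendsto (fun n => min (R:ℝ) (d n z.1)) atTop (nhds 0) := by
              have h5 := (tendsto_const_nhds :
                Tendsto (fun _ : ℕ => (R:ℝ)) atTop (nhds (R:ℝ))).min h3
              simpa [min_eq_right (Nat.cast_nonneg R : (0:ℝ) ≤ (R:ℝ))] using h5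
            have h5 : Tendsto (fun n => (min (R:ℝ) (d n z.1)) ^ ((1:ℝ)+k)) atTop (nhds 0) := by
              have hcont : ContinuousAt (fun t : ℝ => t ^ ((1:ℝ)+k)) 0 :=
                Real.continuousAt_rpow_const 0 (1+k) (Or.inr (by positivity))
              have h6 := hcont.tendsto.comp h4
              simpa [Real.zero_rpow (by positivity : (1:ℝ)+k ≠ 0), Function.comp_def] using h6
            have h7 := (ENNReal.continuous_ofReal.continuousAt.tendsto).comp h5
            simp only [he, Set.indicator_of_mem hzR]
            simpa [Function.comp_def] using h7
          · simp only [he, Set.indicator_of_notMem hzR]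
            rw [Real.zero_rpow (by positivity : (1:ℝ)+k ≠ 0)]
            simpa using (tendsto_const_nhds :
              Tendsto (fun _ : ℕ => (0:ℝ≥0∞)) atTop (nhds 0))
      rwa [lintegral_zero] at h0
    have hIneq : ∀ n, ENNReal.ofReal (∫ z : E3 × E3, f n z.1 z.2 * g R z) ≤
        K n + ENNReal.ofReal J * (T n) ^ (1/(1+k)) := by
      intro n
      have hint : Integrable (fun z : E3 × E3 => f n z.1 z.2 * g R z) volume :=
        integrable_mul_mem hk (Function.uncurry (f n)) (g R) (hfnmem n) (hgmem R)
      have hnn : ∀ᵐ z : E3 × E3, 0 ≤ f n z.1 z.2 * g R z :=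
        (hfpos n).mono fun z hz => mul_nonneg hz (hgnn R z)
      rw [MeasureTheory.ofReal_integral_eq_lintegral_ofReal hint hnn]
      exact le_trans (hsplit n) (add_le_add_right (hE n) _)
    have h0eq : (∫⁻ z : E3 × E3, ENNReal.ofReal (f₀ z.1 z.2 * g R z)) =
        ENNReal.ofReal (∫ z : E3 × E3, f₀ z.1 z.2 * g R z) :=
      (MeasureTheory.ofReal_integral_eq_lintegral_ofReal
        (integrable_mul_mem hk (Function.uncurry f₀) (g R) hf₀Lp (hgmem R))
        (hf₀pos.mono fun z hz => mul_nonneg hz (hgnn R z))).symm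
    have hlim2 : liminf (fun n => ENNReal.ofReal (∫ z : E3 × E3, f n z.1 z.2 * g R z)) atTop
        = ENNReal.ofReal (∫ z : E3 × E3, f₀ z.1 z.2 * g R z) :=
      (ENNReal.tendsto_ofReal (hweakf (g R) (hgmem R))).liminf_eq
    rw [h0eq, ← hlim2]
    rcases eq_top_or_lt_top (liminf K atTop) with htop | _
    · rw [htop]; exact le_top
    refine ENNReal.le_of_forall_pos_le_add fun ε hε hK' => ?_
    have hJt : ENNReal.ofReal J ≠ ⊤ := ENNReal.ofReal_ne_top
    have hδ0 : (ε : ℝ≥0∞) ≠ 0 := by exact_mod_cast hε.ne'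
    set η : ℝ≥0∞ := ((ε : ℝ≥0∞) / ENNReal.ofReal J) ^ ((1:ℝ)+k) with hη
    have hηpos : 0 < η := ENNReal.rpow_pos_of_nonneg (ENNReal.div_pos hδ0 hJt) (by linarith)
    have hev : ∀ᶠ n in atTop, ENNReal.ofReal J * (T n) ^ (1/(1+k)) ≤ (ε : ℝ≥0∞) := by
      filter_upwards [hTtend.eventually (gt_mem_nhds hηpos)] with n hn
      have h1 : (T n) ^ (1/(1+k)) ≤ η ^ (1/(1+k)) := ENNReal.rpow_le_rpow hn.le (by positivity)
      have h2 : η ^ (1/(1+k)) = (ε : ℝ≥0∞) / ENNReal.ofReal J := by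
        rw [hη, ← ENNReal.rpow_mul, mul_one_div_cancel (by positivity : (1:ℝ)+k ≠ 0),
          ENNReal.rpow_one]
      calc ENNReal.ofReal J * (T n) ^ (1/(1+k))
          ≤ ENNReal.ofReal J * ((ε : ℝ≥0∞) / ENNReal.ofReal J) := by
            rw [← h2]; exact mul_le_mul_right h1 _
        _ ≤ (ε : ℝ≥0∞) := ENNReal.mul_div_le
    calc liminf (fun n => ENNReal.ofReal (∫ z : E3 × E3, f n z.1 z.2 * g R z)) atTop
        ≤ liminf (fun n => K n + (ε : ℝ≥0∞)) atTop := by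
          refine liminf_le_liminf ?_
          filter_upwards [hev] with n hn
          exact le_trans (hIneq n) (add_le_add_right hn _)
      _ = liminf K atTop + (ε : ℝ≥0∞) :=
          liminf_add_const atTop K (ε : ℝ≥0∞) (by isBoundedDefault) (by isBoundedDefault)
  -- monotone convergence in R
  have hmono2 : Monotone (fun R : ℕ => fun z : E3 × E3 =>
      ENNReal.ofReal (f₀ z.1 z.2 * g R z)) := by
    intro R1 R2 hR z
    simp only
    rcases le_or_gt 0 (f₀ z.1 z.2) with hf | hf
    · refine ENNReal.ofReal_le_ofReal (mul_le_mul_of_nonneg_left ?_ hf)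
      by_cases hz : z ∈ s R1
      · have hz2 : z ∈ s R2 :=
          Metric.closedBall_subset_closedBall (by exact_mod_cast hR) hz
        rw [hg]; simp only [Set.indicator_of_mem hz, Set.indicator_of_mem hz2]
        exact min_le_min le_rfl (by exact_mod_cast hR)
      · rw [hg]; simp only [Set.indicator_of_notMem hz]
        exact hgnn R2 z
    · have h1 : f₀ z.1 z.2 * g R1 z ≤ 0 := mul_nonpos_of_nonpos_of_nonneg hf.le (hgnn _ _)
      have h2 : f₀ z.1 z.2 * g R2 z ≤ 0 := mul_nonpos_of_nonpos_of_nonneg hf.le (hgnn _ _)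
      simp [ENNReal.ofReal_eq_zero.mpr h1, ENNReal.ofReal_eq_zero.mpr h2]
  have hsup : ∀ᵐ z : E3 × E3, (⨆ R : ℕ, ENNReal.ofReal (f₀ z.1 z.2 * g R z))
      = ENNReal.ofReal (w φ₀ z * f₀ z.1 z.2) := by
    filter_upwards [hf₀pos] with z hz
    apply le_antisymm
    · refine iSup_le fun R => ENNReal.ofReal_le_ofReal ?_
      rw [mul_comm (w φ₀ z)]
      exact mul_le_mul_of_nonneg_left (hglew R z) hz
    · set R : ℕ := ⌈max (max ‖z.1‖ ‖z.2‖) (w φ₀ z)⌉₊ with hR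
      have hzR : z ∈ s R := by
        rw [hs]
        simp only [Metric.mem_closedBall, dist_zero_right]
        rw [Prod.norm_def]
        refine max_le ?_ ?_ <;>
          exact le_trans (by simp [le_max_iff, le_refl, true_or, or_true]) (Nat.le_ceil _)
      have hwR : w φ₀ z ≤ (R:ℝ) := le_trans (le_max_right _ _) (Nat.le_ceil _)
      refine le_iSup_of_le R (le_of_eq ?_)
      rw [hg]
      simp only [Set.indicator_of_mem hzR]
      rw [min_eq_left hwR, mul_comm]
  calc (∫⁻ z : E3 × E3, ENNReal.ofReal (w φ₀ z * f₀ z.1 z.2))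
      = ∫⁻ z : E3 × E3, ⨆ R : ℕ, ENNReal.ofReal (f₀ z.1 z.2 * g R z) :=
        (lintegral_congr_ae hsup).symm
    _ = ⨆ R : ℕ, ∫⁻ z : E3 × E3, ENNReal.ofReal (f₀ z.1 z.2 * g R z) := by
        refine lintegral_iSup (fun R => ?_) hmono2
        exact (hf₀meas.mul (hgmeas R)).ennreal_ofReal
    _ ≤ liminf K atTop := iSup_le key

end Helpers

/-- weak lower semicontinuity of the energy functional along sequences of
admissible pairs: if `fₙ ⇀ f₀` weakly in `L^{1+1/k}`, `φₙ → φ₀` a.e. and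
`∇φₙ ⇀ ∇φ₀` weakly in `L²`, with `f₀ ≥ 0` a.e. in `L^{1+1/k}` and `φ₀ ≤ 0` a.e. a
potential, then `liminf 𝓔(fₙ,φₙ) ≥ 𝓔(f₀,φ₀)`. -/
theorem energy_weakly_lower_semicontinuous (k M J : ℝ)
    (hk : 0 < k) (hk2 : k < 2) (hM : 0 < M) (hJ : 0 < J)
    (f : ℕ → E3 → E3 → ℝ) (φ : ℕ → E3 → ℝ)
    (hadm : ∀ n, Admissible k M J (f n) (φ n))
    (f₀ : E3 → E3 → ℝ) (φ₀ : E3 → ℝ)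
    (hf₀meas : Measurable (Function.uncurry f₀))
    (hf₀pos : ∀ᵐ z : E3 × E3, 0 ≤ f₀ z.1 z.2)
    (hf₀Lp : MemLp (Function.uncurry f₀) (ENNReal.ofReal (1 + 1/k)) volume)
    (hφ₀ : IsPotential φ₀) (hφ₀neg : ∀ᵐ x : E3, φ₀ x ≤ 0)
    (hweakf : ∀ g : E3 × E3 → ℝ, MemLp g (ENNReal.ofReal (1 + k)) volume →
      Tendsto (fun n => ∫ z : E3 × E3, f n z.1 z.2 * g z) atTop
        (nhds (∫ z : E3 × E3, f₀ z.1 z.2 * g z)))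
    (haeφ : ∀ᵐ x : E3, Tendsto (fun n => φ n x) atTop (nhds (φ₀ x)))
    (hweakgrad : ∀ G : E3 → E3, MemLp G 2 volume →
      Tendsto (fun n => ∫ x : E3, (inner ℝ (gradient (φ n) x) (G x) : ℝ)) atTop
        (nhds (∫ x : E3, (inner ℝ (gradient φ₀ x) (G x) : ℝ)))) :
    energy f₀ φ₀ ≤ Filter.liminf (fun n => energy (f n) (φ n)) atTop := by
  have hL := fun n => ((hadm n).2.1)
  have hGamma := fun n => ((hadm n).1)
  -- kinetic part
  have hkin : kinE f₀ φ₀ ≤ liminf (fun n => kinE (f n) (φ n)) atTop :=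
    kin_lsc hk hJ f φ (fun n => (hGamma n).1) (fun n => (hGamma n).2.1)
      (fun n => (hGamma n).2.2.2) (fun n => (hL n).1.continuous)
      f₀ φ₀ hf₀meas hf₀pos hf₀Lp hφ₀.1.continuous hweakf haeφ
  -- gradient part
  have hgmem : ∀ n, MemLp (gradient (φ n)) 2 (volume : Measure E3) := fun n =>
    memLp_gradient (hL n).1 (hL n).2.1
  have h0mem : MemLp (gradient φ₀) 2 (volume : Measure E3) :=
    memLp_gradient hφ₀.1 hφ₀.2.1
  have hgradlsc := grad_lsc (fun n => gradient (φ n)) (gradient φ₀) hgmem h0mem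
    (hweakgrad (gradient φ₀) h0mem)
  have hgrad2 : (∫⁻ x : E3, ENNReal.ofReal (‖gradient φ₀ x‖ ^ 2)) / 2 ≤
      liminf (fun n => (∫⁻ x : E3, ENNReal.ofReal (‖gradient (φ n) x‖ ^ 2)) / 2) atTop := by
    have h1 : liminf (fun n => (∫⁻ x : E3, ENNReal.ofReal (‖gradient (φ n) x‖ ^ 2))) atTop
        * (2 : ℝ≥0∞)⁻¹ ≤
        liminf (fun n => (∫⁻ x : E3, ENNReal.ofReal (‖gradient (φ n) x‖ ^ 2)) * 2⁻¹) atTop := by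
      have h2 := ENNReal.le_liminf_mul
        (f := (atTop : Filter ℕ))
        (u := fun n => (∫⁻ x : E3, ENNReal.ofReal (‖gradient (φ n) x‖ ^ 2)))
        (v := fun _ => (2 : ℝ≥0∞)⁻¹)
      rwa [liminf_const] at h2
    calc (∫⁻ x : E3, ENNReal.ofReal (‖gradient φ₀ x‖ ^ 2)) / 2
        = (∫⁻ x : E3, ENNReal.ofReal (‖gradient φ₀ x‖ ^ 2)) * 2⁻¹ := by
          rw [div_eq_mul_inv]
      _ ≤ liminf (fun n => (∫⁻ x : E3, ENNReal.ofReal (‖gradient (φ n) x‖ ^ 2))) atTop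
            * (2 : ℝ≥0∞)⁻¹ := mul_le_mul_left hgradlsc _
      _ ≤ liminf (fun n =>
            (∫⁻ x : E3, ENNReal.ofReal (‖gradient (φ n) x‖ ^ 2)) * 2⁻¹) atTop := h1
      _ = liminf (fun n =>
            (∫⁻ x : E3, ENNReal.ofReal (‖gradient (φ n) x‖ ^ 2)) / 2) atTop := by
          simp_rw [div_eq_mul_inv]
  -- combine
  have hadd := enn_le_liminf_add
    (u := fun n => kinE (f n) (φ n))
    (v := fun n => (∫⁻ x : E3, ENNReal.ofReal (‖gradient (φ n) x‖ ^ 2)) / 2)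
  calc energy f₀ φ₀
      = kinE f₀ φ₀ + (∫⁻ x : E3, ENNReal.ofReal (‖gradient φ₀ x‖ ^ 2)) / 2 := rfl
    _ ≤ liminf (fun n => kinE (f n) (φ n)) atTop +
        liminf (fun n => (∫⁻ x : E3, ENNReal.ofReal (‖gradient (φ n) x‖ ^ 2)) / 2) atTop :=
        add_le_add hkin hgrad2
    _ ≤ liminf (fun n => kinE (f n) (φ n) +
        (∫⁻ x : E3, ENNReal.ofReal (‖gradient (φ n) x‖ ^ 2)) / 2) atTop := hadd
    _ = liminf (fun n => energy (f n) (φ n)) atTop := rfl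
end
end
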